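/- Let G be a simple graph and let W be a closed walk in G of positive length such that: (non-reversing) no two consecutive steps of W traverse the same edge; (tailless) the first and last steps of W traverse different edges; and (abelian-forcing) for every ordered pair of adjacent vertices (u,v), the number of steps of W going from u to v equals the number of steps of W going from v to u. Then G contains two cycles, each of whose edges are edges traversed by W, whose edge sets are distinct; in particular W contains at least two different cycles. -/

import Mathlib

open SimpleGraph

section Aux
open SimpleGraph.Walk List
variable {V : Type*} [DecidableEq V] {G : SimpleGraph V}

section Helpers

variable {α : Type*}

lemma chain_equiv_head {T : α → α → Prop} {P : α → Prop} :
    ∀ (l : List α) (a : α), List.Chain T a l →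
      (∀ x ∈ a :: l, ∀ y ∈ a :: l, T x y → (P x ↔ P y)) →
      ∀ x ∈ a :: l, (P x ↔ P a)
  | [], a, _, _, x, hx => by
      rcases List.mem_singleton.mp hx with rfl; rfl
  | b :: l, a, hch, hT, x, hx => by
      rcases List.chain_cons.mp hch with ⟨hab, hch'⟩
      rcases List.mem_cons.mp hx with rfl | hx'
      · rfl
      · have hsub : ∀ z ∈ b :: l, z ∈ a :: b :: l := fun z hz => List.mem_cons_of_mem _ hz
        have ih := chain_equiv_head l b hch'
          (fun x hx y hy hxy => hT x (hsub x hx) y (hsub y hy) hxy) x hx'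
        exact ih.trans (hT a (by simp) b (by simp) hab).symm

lemma chain'_equiv {T : α → α → Prop} {P : α → Prop} (l : List α)
    (hch : List.Chain' T l)
    (hT : ∀ x ∈ l, ∀ y ∈ l, T x y → (P x ↔ P y)) :
    ∀ x ∈ l, ∀ y ∈ l, (P x ↔ P y) := by
  cases l with
  | nil => intro x hx; simp at hx
  | cons a l =>
    intro x hx y hy
    exact (chain_equiv_head l a hch hT x hx).trans (chain_equiv_head l a hch hT y hy).symm

lemma chain'_and {R S : α → α → Prop} {l : List α} (hR : List.Chain' R l)
    (hS : List.Chain' S l) : List.Chain' (fun a b => R a b ∧ S a b) l := by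
  induction l with
  | nil => exact List.isChain_nil
  | cons a l ih =>
    cases l with
    | nil => exact List.isChain_singleton _
    | cons b l =>
      rcases List.isChain_cons_cons.mp hR with ⟨hr, hR'⟩
      rcases List.isChain_cons_cons.mp hS with ⟨hs, hS'⟩
      exact List.isChain_cons_cons.mpr ⟨⟨hr, hs⟩, ih hR' hS'⟩

lemma chain'_rotate {l₁ l₂ : List α} (h : List.Chain' (· ≠ ·) (l₁ ++ l₂))
    (hseam : (l₁ ++ l₂).head? ≠ (l₁ ++ l₂).getLast?) :
    List.Chain' (· ≠ ·) (l₂ ++ l₁) ∧ (l₂ ++ l₁).head? ≠ (l₂ ++ l₁).getLast? := by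
  rcases List.isChain_append.mp h with ⟨h₁, h₂, hmid⟩
  rcases eq_or_ne l₁ [] with rfl | hl₁
  · simpa using ⟨h, hseam⟩
  rcases eq_or_ne l₂ [] with rfl | hl₂
  · constructor
    · simpa using h
    · simpa using hseam
  rw [List.head?_append_of_ne_nil _ hl₁, List.getLast?_append_of_ne_nil _ hl₂] at hseam
  constructor
  · refine List.isChain_append.mpr ⟨h₂, h₁, ?_⟩
    intro x hx y hy hxy
    apply hseam
    rw [Option.mem_def] at hx hy
    rw [hy, hx, hxy]
  · rw [List.head?_append_of_ne_nil _ hl₂, List.getLast?_append_of_ne_nil _ hl₁]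
    intro hEq
    have hy : l₂.head? = some (l₂.head hl₂) := List.head?_eq_head hl₂
    exact hmid _ (Option.mem_def.mpr (by rw [← hEq, hy])) _ (Option.mem_def.mpr hy) rfl

end Helpers


lemma edge_head_not_mem {x v : V} (q : G.Walk x v)
    (hq : q.support.Nodup)
    (hchain : List.Chain' (· ≠ ·) (s(v, x) :: q.edges)) :
    s(v, x) ∉ q.edges := by
  intro he
  have he' : s(v, x) ∈ q.darts.map Dart.edge := he
  obtain ⟨d, hd, hde⟩ := List.mem_map.mp he'
  have hde' : s(d.fst, d.snd) = s(v, x) := hde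
  rw [Sym2.eq_iff] at hde'
  have hsnd_ne : d.snd ≠ x := by
    intro hx
    have hxt : x ∈ q.support.tail := by
      rw [← Walk.map_snd_darts]
      exact List.mem_map.mpr ⟨d, hd, hx⟩
    rw [q.support_eq_cons] at hq
    exact (List.nodup_cons.mp hq).1 hxt
  rcases hde' with ⟨hfv, hsx⟩ | ⟨hfx, hsv⟩
  · exact hsnd_ne hsx
  · cases q with
    | nil => simp at he
    | @cons _ y _ h₂ q₂ =>
      have hnodup : ((Walk.cons h₂ q₂).darts.map (·.fst)).Nodup := by
        rw [Walk.map_fst_darts]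
        exact hq.sublist (List.dropLast_sublist _)
      have hd₀ : (⟨(x, y), h₂⟩ : G.Dart) ∈ (Walk.cons h₂ q₂).darts := by
        rw [Walk.darts_cons]; exact List.mem_cons_self
      have hdd : d = ⟨(x, y), h₂⟩ :=
        List.inj_on_of_nodup_map hnodup hd hd₀ hfx
      have hyv : y = v := by rw [hdd] at hsv; exact hsv
      have hchain2 : s(v, x) ≠ s(x, y) := by
        rw [Walk.edges_cons] at hchain
        exact (List.isChain_cons_cons.mp hchain).1
      exact hchain2 (by rw [hyv, Sym2.eq_swap])

lemma exists_cycle_aux :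
    ∀ (n : ℕ) (v : V) (p : G.Walk v v), p.length ≤ n → 0 < p.length →
      List.Chain' (· ≠ ·) p.edges →
      ∃ (a : V) (c : G.Walk a a), c.IsCycle ∧ a ∈ p.support ∧ ∀ e ∈ c.edges, e ∈ p.edges := by
  intro n
  induction n with
  | zero => intro v p hle hpos _; omega
  | succ n ih =>
    intro v p hle hpos hchain
    by_cases hnd : p.support.tail.Nodup
    · -- p itself is a cycle
      cases p with
      | nil => simp at hpos
      | @cons _ x _ h q =>
        refine ⟨v, Walk.cons h q, ?_, Walk.start_mem_support _, fun e he => he⟩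
        rw [Walk.cons_isCycle_iff]
        have hqsupp : q.support.Nodup := by
          rw [Walk.support_cons] at hnd; exact hnd
        refine ⟨(Walk.isPath_def _).mpr hqsupp, ?_⟩
        apply edge_head_not_mem q hqsupp
        rw [Walk.edges_cons] at hchain
        exact hchain
    · obtain ⟨x, hxdup⟩ := List.exists_duplicate_iff_not_nodup.mpr hnd
      have hcount2 : 2 ≤ p.support.tail.count x := List.duplicate_iff_two_le_count.mp hxdup
      have hxsupp : x ∈ p.support := by
        rw [p.support_eq_cons]
        exact List.mem_cons_of_mem _ hxdup.mem
      set tk := p.takeUntil x hxsupp with htk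
      set dr := p.dropUntil x hxsupp with hdr
      have hspec : tk.append dr = p := p.take_spec hxsupp
      have hsupp_eq : p.support = tk.support ++ dr.support.tail := by
        rw [← hspec, Walk.support_append]
      have htk1 : tk.support.count x = 1 := p.count_support_takeUntil_eq_one hxsupp
      have h1 : p.support.count x = 1 + dr.support.tail.count x := by
        rw [hsupp_eq, List.count_append, htk1]
      have h2 : p.support.tail.count x ≤ p.support.count x := by
        conv_rhs => rw [p.support_eq_cons]
        exact (List.sublist_cons_self _ _).count_le x
      have hdrc1 : 1 ≤ dr.support.tail.count x := by omega
      -- dr is not nil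
      have hlen_p : p.length = tk.length + dr.length := by
        rw [← hspec, Walk.length_append]
      cases hdreq : dr with
      | nil =>
        rw [hdreq] at hdrc1; simp at hdrc1
      | @cons _ z _ h' r' =>
        have hr'supp : dr.support.tail = r'.support := by rw [hdreq, Walk.support_cons]; rfl
        rw [hr'supp] at h1 hdrc1
        have hxr : x ∈ r'.support := List.count_pos_iff.mp (by omega)
        set tu := r'.takeUntil x hxr with htu
        set du := r'.dropUntil x hxr with hdu
        have hspec' : tu.append du = r' := r'.take_spec hxr
        have htu_lt : tu.length < r'.length := by
          have hle' : tu.length ≤ r'.length := r'.length_takeUntil_le hxr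
          rcases lt_or_eq_of_le hle' with h | h
          · exact h
          · exfalso
            have hdu0 : du.length = 0 := by
              have := congrArg Walk.length hspec'
              rw [Walk.length_append] at this
              omega
            have hxv : x = v := Walk.eq_of_length_eq_zero hdu0
            have h3 : p.support.count x = p.support.tail.count x + 1 := by
              conv_lhs => rw [p.support_eq_cons]
              rw [List.count_cons, hxv]; simp
            have hdusupp : du.support = [x] := by
              cases hdueq : du with
              | nil => rw [Walk.support_nil]
              | cons h'' r'' => rw [hdueq] at hdu0; simp at hdu0
            have h4 : r'.support.count x = 1 := by
              rw [← hspec', Walk.support_append, List.count_append, hdusupp]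
              rw [r'.count_support_takeUntil_eq_one hxr]
              simp
            omega
        -- the shorter closed walk
        set t : G.Walk x x := Walk.cons h' tu with ht
        have htlen : t.length = tu.length + 1 := by rw [ht, Walk.length_cons]
        have hdlen : dr.length = r'.length + 1 := by rw [hdreq, Walk.length_cons]
        have htlt : t.length < p.length := by omega
        -- edges of p decompose
        have hedges_p : p.edges = tk.edges ++ dr.edges := by
          rw [← hspec, Walk.edges_append]
        have hedges_dr : dr.edges = s(x, z) :: r'.edges := by
          rw [hdreq, Walk.edges_cons]
        have hedges_r' : r'.edges = tu.edges ++ du.edges := by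
          rw [← hspec', Walk.edges_append]
        have ht_edges : t.edges = s(x, z) :: tu.edges := by rw [ht, Walk.edges_cons]
        have ht_prefix : t.edges <+: dr.edges := by
          rw [ht_edges, hedges_dr, hedges_r']
          exact ⟨du.edges, by simp⟩
        have hchain_dr : List.Chain' (· ≠ ·) dr.edges :=
          hchain.suffix (by rw [hedges_p]; exact ⟨tk.edges, rfl⟩)
        have hchain_t : List.Chain' (· ≠ ·) t.edges := hchain_dr.prefix ht_prefix
        have htsub : ∀ e ∈ t.edges, e ∈ p.edges := by
          intro e he
          rw [hedges_p]
          exact List.mem_append_right _ (ht_prefix.subset he)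
        have htsupp : ∀ a ∈ t.support, a ∈ p.support := by
          intro a ha
          rw [ht, Walk.support_cons] at ha
          rcases List.mem_cons.mp ha with rfl | ha'
          · exact hxsupp
          · have h1 : a ∈ r'.support := r'.support_takeUntil_subset hxr ha'
            have h2 : a ∈ dr.support := by
              rw [hdreq, Walk.support_cons]; exact List.mem_cons_of_mem _ h1
            exact p.support_dropUntil_subset hxsupp h2
        obtain ⟨a, c, hcyc, hasupp, hcsub⟩ := ih x t (by omega) (by omega) hchain_t
        exact ⟨a, c, hcyc, htsupp a hasupp, fun e he => htsub e (hcsub e he)⟩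


section CycleFacts

variable {a : V} {c : G.Walk a a} (hc : c.IsCycle)

lemma cyc_tail_ne_nil (hc : c.IsCycle) : c.support.tail ≠ [] := by
  have h3 := hc.three_le_length
  have hl : c.support.length = c.length + 1 := c.length_support
  intro h
  have h2 := congrArg List.length c.support_eq_cons
  rw [h] at h2
  simp only [List.length_cons, List.length_nil] at h2
  omega

lemma cyc_tail_getLast (hc : c.IsCycle) :
    c.support.tail.getLast (cyc_tail_ne_nil hc) = a := by
  rw [List.getLast_tail]
  exact c.getLast_support

lemma cyc_dropLast_nodup (hc : c.IsCycle) : c.support.dropLast.Nodup := by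
  have htail := hc.support_nodup
  have hne := cyc_tail_ne_nil hc
  have hsup : c.support = a :: c.support.tail := c.support_eq_cons
  have hdl : c.support.dropLast = a :: c.support.tail.dropLast := by
    conv_lhs => rw [hsup]
    exact List.dropLast_cons_of_ne_nil hne
  rw [hdl]
  have hsplit : c.support.tail = c.support.tail.dropLast ++ [a] := by
    conv_lhs => rw [← List.dropLast_append_getLast hne]
    rw [cyc_tail_getLast hc]
  rw [hsplit] at htail
  have h2 := List.nodup_append'.mp htail
  exact List.nodup_cons.mpr ⟨fun hmem => h2.2.2 hmem (by simp), h2.1⟩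

lemma cyc_dart_inj_edge (hc : c.IsCycle) :
    ∀ ⦃d₁ : G.Dart⦄, d₁ ∈ c.darts → ∀ ⦃d₂ : G.Dart⦄, d₂ ∈ c.darts →
      d₁.edge = d₂.edge → d₁ = d₂ :=
  List.inj_on_of_nodup_map (hc.edges_nodup)

lemma cyc_dart_inj_fst (hc : c.IsCycle) :
    ∀ ⦃d₁ : G.Dart⦄, d₁ ∈ c.darts → ∀ ⦃d₂ : G.Dart⦄, d₂ ∈ c.darts →
      d₁.fst = d₂.fst → d₁ = d₂ :=
  List.inj_on_of_nodup_map (by rw [Walk.map_fst_darts]; exact cyc_dropLast_nodup hc)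

lemma cyc_dart_inj_snd (hc : c.IsCycle) :
    ∀ ⦃d₁ : G.Dart⦄, d₁ ∈ c.darts → ∀ ⦃d₂ : G.Dart⦄, d₂ ∈ c.darts →
      d₁.snd = d₂.snd → d₁ = d₂ :=
  List.inj_on_of_nodup_map (by rw [Walk.map_snd_darts]; exact hc.support_nodup)

lemma cyc_not_symm_mem (hc : c.IsCycle) {d : G.Dart} (hd : d ∈ c.darts) :
    d.symm ∉ c.darts := by
  intro hs
  have heq : d = d.symm := cyc_dart_inj_edge hc hd hs (Dart.edge_symm d).symm
  have hfs : d.fst = d.snd := by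
    conv_lhs => rw [heq]
    rfl
  exact d.adj.ne hfs
end CycleFacts


lemma dart_of_edge_mem {u v : V} {p : G.Walk u v} {e : Sym2 V} (he : e ∈ p.edges) :
    ∃ d ∈ p.darts, d.edge = e := List.mem_map.mp he

lemma no_abelian_walk_in_cycle {a u : V} {c : G.Walk a a} (hc : c.IsCycle)
    (p : G.Walk u u) (hpos : 0 < p.length)
    (hchain : List.Chain' (· ≠ ·) p.edges)
    (hsub : ∀ e ∈ p.edges, e ∈ c.edges)
    (hab : ∀ d : G.Dart, p.darts.count d = p.darts.count d.symm) : False := by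
  -- every dart of p is either in c.darts or its symm is
  have halt : ∀ d ∈ p.darts, d ∈ c.darts ∨ d.symm ∈ c.darts := by
    intro d hd
    have he : d.edge ∈ c.edges := hsub _ (List.mem_map.mpr ⟨d, hd, rfl⟩)
    obtain ⟨δ, hδ, hδe⟩ := dart_of_edge_mem he
    rcases (dart_edge_eq_iff δ d).mp hδe with rfl | rfl
    · exact Or.inl hδ
    · exact Or.inr (by simpa using hδ)
  -- chain on darts
  have hchaind : List.Chain' (fun d₁ d₂ : G.Dart => G.DartAdj d₁ d₂ ∧ d₁.edge ≠ d₂.edge)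
      p.darts := by
    apply chain'_and (p.isChain_dartAdj_darts)
    have : p.edges = p.darts.map Dart.edge := rfl
    rw [this] at hchain
    exact (List.isChain_map Dart.edge).mp hchain
  -- transition invariance
  have htrans : ∀ d₁ ∈ p.darts, ∀ d₂ ∈ p.darts,
      (G.DartAdj d₁ d₂ ∧ d₁.edge ≠ d₂.edge) → ((d₁ ∈ c.darts) ↔ (d₂ ∈ c.darts)) := by
    rintro d₁ hd₁ d₂ hd₂ ⟨hadj, hne⟩
    constructor
    · intro h₁
      rcases halt d₂ hd₂ with h₂ | h₂
      · exact h₂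
      · exfalso
        have hsnd : d₂.symm.snd = d₁.snd := hadj.symm
        have := cyc_dart_inj_snd hc h₂ h₁ hsnd
        apply hne
        rw [← this, Dart.edge_symm]
    · intro h₂
      rcases halt d₁ hd₁ with h₁ | h₁
      · exact h₁
      · exfalso
        have hfst : d₁.symm.fst = d₂.fst := hadj
        have := cyc_dart_inj_fst hc h₁ h₂ hfst
        apply hne
        rw [← this, Dart.edge_symm]
  have hequiv := chain'_equiv (P := fun d : G.Dart => d ∈ c.darts) p.darts hchaind htrans
  -- first dart
  have hdne : p.darts ≠ [] := by
    intro h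
    have := p.length_darts
    rw [h] at this
    simp at this
    omega
  set d₀ := p.darts.head hdne with hd₀
  have hd₀mem : d₀ ∈ p.darts := List.head_mem hdne
  have hsymm_mem : d₀.symm ∈ p.darts := by
    have h1 : 0 < p.darts.count d₀ := List.count_pos_iff.mpr hd₀mem
    have h2 := hab d₀
    exact List.count_pos_iff.mp (by omega)
  have hiff := hequiv d₀ hd₀mem d₀.symm hsymm_mem
  by_cases hfwd : d₀ ∈ c.darts
  · exact cyc_not_symm_mem hc hfwd (hiff.mp hfwd)
  · rcases halt d₀ hd₀mem with h | h
    · exact hfwd h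
    · exact hfwd (by simpa using hiff.mpr h)


lemma exists_split_first_edge {a b : V} :
    ∀ (p : G.Walk a b) {e : Sym2 V}, e ∈ p.edges →
    ∃ (z z' : V) (q : G.Walk a z) (h : G.Adj z z') (r : G.Walk z' b),
      p = q.append (Walk.cons h r) ∧ s(z, z') = e ∧ e ∉ q.edges := by
  intro p
  induction p with
  | nil => intro e he; simp at he
  | @cons x y _ h' p' ih =>
    intro e he
    by_cases h0 : s(x, y) = e
    · exact ⟨x, y, Walk.nil, h', p', by simp, h0, by simp⟩
    · have he' : e ∈ p'.edges := by
        rw [Walk.edges_cons] at he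
        rcases List.mem_cons.mp he with h | h
        · exact absurd h.symm h0
        · exact h
      obtain ⟨z, z', q, hzz, r, hpeq, hze, hq⟩ := ih he'
      refine ⟨z, z', Walk.cons h' q, hzz, r, by rw [Walk.cons_append, hpeq], hze, ?_⟩
      rw [Walk.edges_cons]
      intro hmem
      rcases List.mem_cons.mp hmem with h | h
      · exact h0 h.symm
      · exact hq h

lemma side_walk {x y : V} (p : G.Walk y y)
    (hchain : List.Chain' (· ≠ ·) p.edges)
    (hseam : p.edges.head? ≠ p.edges.getLast?)
    (he : s(x, y) ∈ p.edges) :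
    (∃ q : G.Walk y x, s(x, y) ∉ q.edges ∧ ∀ e' ∈ q.edges, e' ∈ p.edges) ∨
    (∃ q : G.Walk y y, 0 < q.length ∧ s(x, y) ∉ q.edges ∧
      List.Chain' (· ≠ ·) q.edges ∧ ∀ e' ∈ q.edges, e' ∈ p.edges) := by
  obtain ⟨z, z', q, h, r, hpeq, hze, hq⟩ := exists_split_first_edge p he
  have hpedges : p.edges = q.edges ++ (s(z, z') :: r.edges) := by
    rw [hpeq, Walk.edges_append, Walk.edges_cons]
  rw [Sym2.eq_iff] at hze
  rcases hze with ⟨rfl, rfl⟩ | ⟨rfl, rfl⟩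
  · -- z = x : q is a walk from y to x avoiding e
    exact Or.inl ⟨q, hq, fun e' he' => by rw [hpedges]; exact List.mem_append_left _ he'⟩
  · -- z = y : here y := z, x := z'
    by_cases hql : 0 < q.length
    · refine Or.inr ⟨q, hql, hq, hchain.prefix ⟨_, hpedges.symm⟩, fun e' he' => by
        rw [hpedges]; exact List.mem_append_left _ he'⟩
    · -- q is trivial: the first edge of p is e
      have hqe : q.edges = [] := by
        have hl := q.length_edges
        rw [← List.length_eq_zero_iff]
        omega
      have hhead : p.edges.head? = some s(z', z) := by
        rw [hpedges, hqe, List.nil_append, List.head?_cons, Sym2.eq_swap]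
      -- split the reverse walk
      have her : s(z', z) ∈ p.reverse.edges := by
        rw [Walk.edges_reverse, List.mem_reverse]; exact he
      obtain ⟨w, w', q₂, h₂, r₂, hpeq₂, hze₂, hq₂⟩ := exists_split_first_edge p.reverse her
      have hpedges₂ : p.edges.reverse = q₂.edges ++ (s(w, w') :: r₂.edges) := by
        rw [← Walk.edges_reverse, hpeq₂, Walk.edges_append, Walk.edges_cons]
      have hmem₂ : ∀ e' ∈ q₂.edges, e' ∈ p.edges := fun e' he' => by
        rw [← List.mem_reverse, hpedges₂]; exact List.mem_append_left _ he'
      rw [Sym2.eq_iff] at hze₂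
      rcases hze₂ with ⟨rfl, rfl⟩ | ⟨hw, hw'⟩
      · exact Or.inl ⟨q₂, hq₂, hmem₂⟩
      · subst hw; subst hw'
        by_cases hql₂ : 0 < q₂.length
        · have hchainrev : List.Chain' (· ≠ ·) p.edges.reverse := by
            apply List.isChain_reverse.mpr
            exact hchain.imp fun _ _ hne => hne.symm
          exact Or.inr ⟨q₂, hql₂, hq₂, hchainrev.prefix ⟨_, hpedges₂.symm⟩, hmem₂⟩
        · exfalso
          have hqe₂ : q₂.edges = [] := by
            have hl := q₂.length_edges
            rw [← List.length_eq_zero_iff]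
            omega
          have hlast : p.edges.getLast? = some s(w', w) := by
            rw [← List.head?_reverse, hpedges₂, hqe₂, List.nil_append, List.head?_cons,
              Sym2.eq_swap]
          exact hseam (hhead.trans hlast.symm)

end Aux



theorem stmt_10 {V : Type*} [DecidableEq V] (G : SimpleGraph V)
    [DecidableRel G.Adj]
    (u : V) (w : G.Walk u u)
    (hpos : 0 < w.length)
    (hnonrev : List.Chain' (· ≠ ·) w.edges)
    (htailless : w.edges.head? ≠ w.edges.getLast?)
    (habelian : ∀ d : G.Dart, w.darts.count d = w.darts.count d.symm) :
    ∃ (a : V) (c₁ : G.Walk a a) (b : V) (c₂ : G.Walk b b),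
      c₁.IsCycle ∧ c₂.IsCycle ∧
      (∀ e ∈ c₁.edges, e ∈ w.edges) ∧
      (∀ e ∈ c₂.edges, e ∈ w.edges) ∧
      c₁.edges.toFinset ≠ c₂.edges.toFinset := by
  by_contra hcon
  push_neg at hcon
  obtain ⟨a, c, hcyc, hasupp, hcsub⟩ := exists_cycle_aux w.length u w le_rfl hpos hnonrev
  have hwc : ∀ e ∈ w.edges, e ∈ c.edges := by
    intro e hew
    by_contra hec
    obtain ⟨d, hd, hde⟩ := dart_of_edge_mem hew
    set x := d.fst with hx
    set y := d.snd with hy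
    have hxy : s(x, y) = e := hde
    set H := SimpleGraph.fromEdgeSet {e' : Sym2 V | e' ∈ w.edges} with hH
    have hHG : H ≤ G := by
      intro p q hpq
      rw [hH, fromEdgeSet_adj] at hpq
      exact w.adj_of_mem_edges hpq.1
    set K := H \ SimpleGraph.fromEdgeSet {e} with hK
    have hKadj : ∀ p q : V, K.Adj p q ↔ (s(p, q) ∈ w.edges ∧ s(p, q) ≠ e ∧ p ≠ q) := by
      intro p q
      rw [hK, SimpleGraph.sdiff_adj, hH, fromEdgeSet_adj, fromEdgeSet_adj]
      simp only [Set.mem_setOf_eq, Set.mem_singleton_iff]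
      tauto
    have hKG : K ≤ G := le_trans sdiff_le hHG
    have hKmem : ∀ (s t : V) (q : G.Walk s t), (∀ e' ∈ q.edges, e' ∈ w.edges) →
        e ∉ q.edges → ∀ e' ∈ q.edges, e' ∈ K.edgeSet := by
      intro s t q hsub hne e'
      induction e' using Sym2.ind with
      | _ p₁ p₂ =>
        intro he'
        rw [SimpleGraph.mem_edgeSet, hKadj]
        exact ⟨hsub _ he', fun h => hne (h ▸ he'), (q.adj_of_mem_edges he').ne⟩
    -- e is a bridge of H
    have hNoReach : ¬ K.Reachable x y := by
      intro hr
      have hHadj : H.Adj x y := by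
        rw [hH, fromEdgeSet_adj]
        exact ⟨by rw [Set.mem_setOf_eq, hxy]; exact hew, d.adj.ne⟩
      have hr' : (H \ SimpleGraph.fromEdgeSet {s(x, y)}).Reachable x y := by
        rw [hxy]; exact hr
      obtain ⟨u', χ, hχcyc, heχ⟩ :=
        (adj_and_reachable_delete_edges_iff_exists_cycle (G := H)).mp ⟨hHadj, hr'⟩
      have hχsub : ∀ e' ∈ χ.edges, e' ∈ w.edges := by
        intro e' he'
        have h1 : e' ∈ H.edgeSet := χ.edges_subset_edgeSet he'
        rw [hH, edgeSet_fromEdgeSet] at h1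
        exact h1.1
      have hχG : ∀ e' ∈ χ.edges, e' ∈ G.edgeSet := fun e' he' =>
        SimpleGraph.edgeSet_mono hHG (χ.edges_subset_edgeSet he')
      have hfin := hcon u' (χ.transfer G hχG) a c (hχcyc.transfer hχG) hcyc
        (by rw [Walk.edges_transfer]; exact hχsub) hcsub
      apply hec
      rw [← List.mem_toFinset, ← hfin, List.mem_toFinset, Walk.edges_transfer]
      rw [← hxy]
      exact heχ
    -- construct a cycle on one side of the bridge
    have mkside : ∀ (x' y' : V), s(x', y') = e → y' ∈ w.support →
        K.Reachable y' x' ∨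
        ∃ (a₂ : V) (c₂ : G.Walk a₂ a₂), c₂.IsCycle ∧ (∀ e' ∈ c₂.edges, e' ∈ w.edges) ∧
          (∀ v₁ ∈ c₂.support, K.Reachable y' v₁) := by
      intro x' y' hxy' hysupp
      set tk := w.takeUntil y' hysupp with htk
      set dr := w.dropUntil y' hysupp with hdr
      have hspec : tk.append dr = w := w.take_spec hysupp
      set p : G.Walk y' y' := dr.append tk with hp
      have hwedges : w.edges = tk.edges ++ dr.edges := by
        rw [← hspec, Walk.edges_append]
      have hpedges : p.edges = dr.edges ++ tk.edges := by
        rw [hp, Walk.edges_append]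
      have hrot := chain'_rotate (l₁ := tk.edges) (l₂ := dr.edges)
        (by rw [← hwedges]; exact hnonrev) (by rw [← hwedges]; exact htailless)
      have hpchain : List.Chain' (· ≠ ·) p.edges := by rw [hpedges]; exact hrot.1
      have hpseam : p.edges.head? ≠ p.edges.getLast? := by rw [hpedges]; exact hrot.2
      have hpsub : ∀ e' ∈ p.edges, e' ∈ w.edges := by
        intro e' he'
        rw [hpedges] at he'
        rw [hwedges]
        rcases List.mem_append.mp he' with h | h
        · exact List.mem_append_right _ h
        · exact List.mem_append_left _ h
      have hep : s(x', y') ∈ p.edges := by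
        rw [hpedges]
        have : e ∈ w.edges := hew
        rw [hwedges] at this
        rw [hxy']
        rcases List.mem_append.mp this with h | h
        · exact List.mem_append_right _ h
        · exact List.mem_append_left _ h
      rcases side_walk p hpchain hpseam hep with ⟨q, hqe, hqsub⟩ |
        ⟨q, hql, hqe, hqchain, hqsub⟩
      · -- a walk from y' to x' avoiding e : direct reachability
        left
        have hqw : ∀ e' ∈ q.edges, e' ∈ w.edges := fun e' he' => hpsub _ (hqsub _ he')
        have hqK := hKmem _ _ q hqw (by rw [← hxy']; exact hqe)
        exact ⟨q.transfer K hqK⟩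
      · -- a closed walk at y' avoiding e : gives a cycle on y'-side
        right
        have hqw : ∀ e' ∈ q.edges, e' ∈ w.edges := fun e' he' => hpsub _ (hqsub _ he')
        have hqK := hKmem _ _ q hqw (by rw [← hxy']; exact hqe)
        set qK : K.Walk y' y' := q.transfer K hqK with hqKdef
        have hqKlen : 0 < qK.length := by rw [hqKdef, Walk.length_transfer]; exact hql
        have hqKchain : List.Chain' (· ≠ ·) qK.edges := by
          rw [hqKdef, Walk.edges_transfer]; exact hqchain
        obtain ⟨a₂, c₂, hc₂cyc, ha₂supp, hc₂sub⟩ :=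
          exists_cycle_aux qK.length y' qK le_rfl hqKlen hqKchain
        have hc₂w : ∀ e' ∈ c₂.edges, e' ∈ w.edges := by
          intro e' he'
          have := hc₂sub _ he'
          rw [hqKdef, Walk.edges_transfer] at this
          exact hqw _ this
        have hc₂G : ∀ e' ∈ c₂.edges, e' ∈ G.edgeSet := fun e' he' =>
          SimpleGraph.edgeSet_mono hKG (c₂.edges_subset_edgeSet he')
        refine ⟨a₂, c₂.transfer G hc₂G, hc₂cyc.transfer hc₂G, ?_, ?_⟩
        · rw [Walk.edges_transfer]; exact hc₂w
        · intro v₁ hv₁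
          rw [Walk.support_transfer] at hv₁
          have h1 : K.Reachable y' a₂ := ⟨qK.takeUntil a₂ ha₂supp⟩
          have h2 : K.Reachable a₂ v₁ := ⟨c₂.takeUntil v₁ hv₁⟩
          exact h1.trans h2
    have hxsupp : x ∈ w.support := Walk.dart_fst_mem_support_of_mem_darts _ hd
    have hysupp : y ∈ w.support := Walk.dart_snd_mem_support_of_mem_darts _ hd
    rcases mkside x y hxy hysupp with hry | ⟨a₂, c₂, hc₂cyc, hc₂w, hc₂reach⟩
    · exact hNoReach hry.symm
    rcases mkside y x (by rw [Sym2.eq_swap]; exact hxy) hxsupp with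
      hrx | ⟨a₃, c₃, hc₃cyc, hc₃w, hc₃reach⟩
    · exact hNoReach hrx
    -- the two cycles have the same edges, so they share a vertex
    have hfin := hcon a₂ c₂ a₃ c₃ hc₂cyc hc₃cyc hc₂w hc₃w
    have hc₂ne : c₂.edges ≠ [] := by
      intro h
      have h3 := hc₂cyc.three_le_length
      have := c₂.length_edges
      rw [h] at this
      simp at this
      omega
    obtain ⟨e'', he''⟩ := List.exists_mem_of_ne_nil _ hc₂ne
    have he''₃ : e'' ∈ c₃.edges := by
      rw [← List.mem_toFinset, ← hfin, List.mem_toFinset]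
      exact he''
    induction e'' using Sym2.ind with
    | _ p₁ p₂ =>
      have hp₁₂ : p₁ ∈ c₂.support := c₂.fst_mem_support_of_mem_edges he''
      have hp₁₃ : p₁ ∈ c₃.support := c₃.fst_mem_support_of_mem_edges he''₃
      exact hNoReach ((hc₃reach p₁ hp₁₃).trans (hc₂reach p₁ hp₁₂).symm)
  exact no_abelian_walk_in_cycle hcyc w hpos hnonrev hwc habelian
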